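/- For all integers n ≥ 1, the total number of runs of ascents over all Catalan words of length n equals C(2n-1, n); that is, Σ_{w ∈ C_n} runs(w) = C(2n-1, n). -/

import Mathlib

open Finset Nat



def aa (n : ℕ) : ℕ := (2*n-1).choose n

lemma lemA (k : ℕ) : Nat.centralBinom (k+1) = 2 * aa (k+1) := by
  have h : 2*(k+1) = (2*k+1)+1 := by ring
  have h2 : 2*(k+1)-1 = 2*k+1 := by omega
  rw [Nat.centralBinom, h, Nat.choose_succ_succ, Nat.choose_symm_half, aa, h2,
    Nat.choose_symm_half]
  omega

lemma lemB (N : ℕ) : Nat.centralBinom (N+1) + 2 * catalan N = 4 * Nat.centralBinom N := by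
  have h1 := Nat.succ_mul_centralBinom_succ N
  have h2 := succ_mul_catalan_eq_centralBinom N
  have key : (N+1) * (Nat.centralBinom (N+1) + 2 * catalan N) = (N+1) * (4 * Nat.centralBinom N) := by
    calc (N+1) * (Nat.centralBinom (N+1) + 2*catalan N)
        = (N+1)*Nat.centralBinom (N+1) + 2*((N+1)*catalan N) := by ring
      _ = 2*(2*N+1)*Nat.centralBinom N + 2*Nat.centralBinom N := by rw [h1, h2]
      _ = (N+1)*(4*Nat.centralBinom N) := by ring
  exact Nat.eq_of_mul_eq_mul_left (Nat.succ_pos N) key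

lemma lemIV : ∀ N : ℕ, (∑ m ∈ range (N+1), catalan m * Nat.centralBinom (N-m)) + catalan N
    = 2 * Nat.centralBinom N := by
  intro N
  induction N using Nat.strong_induction_on with
  | _ N ih =>
    match N with
    | 0 => simp [Nat.centralBinom]
    | (N+1) =>
      have step1 : ∑ m ∈ range (N+2), catalan m * Nat.centralBinom (N+1-m)
          = Nat.centralBinom (N+1)
            + ∑ m ∈ range (N+1), catalan (m+1) * Nat.centralBinom (N-m) := by
        rw [Finset.sum_range_succ' (fun m => catalan m * Nat.centralBinom (N+1-m)) (N+1)]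
        simp [add_comm]
      have step2 : ∑ m ∈ range (N+1), catalan (m+1) * Nat.centralBinom (N-m)
          = ∑ m ∈ range (N+1), ∑ i ∈ range (m+1),
              catalan i * catalan (m-i) * Nat.centralBinom (N-m) := by
        refine Finset.sum_congr rfl fun m _ => ?_
        rw [catalan_succ m, Fin.sum_univ_eq_sum_range (fun i => catalan i * catalan (m-i)) (m+1),
          Finset.sum_mul]
      have step3 : ∑ m ∈ range (N+1), ∑ i ∈ range (m+1),
              catalan i * catalan (m-i) * Nat.centralBinom (N-m)
          = ∑ i ∈ range (N+1), ∑ m ∈ Finset.Ico i (N+1),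
              catalan i * catalan (m-i) * Nat.centralBinom (N-m) := by
        simp_rw [Finset.range_eq_Ico]
        rw [← Finset.sum_Ico_Ico_comm 0 (N+1) (fun i m => catalan i * catalan (m-i) * Nat.centralBinom (N-m))]
      have step4 : ∀ i ∈ range (N+1), ∑ m ∈ Finset.Ico i (N+1),
              catalan i * catalan (m-i) * Nat.centralBinom (N-m)
          = catalan i * ∑ j ∈ range (N-i+1), catalan j * Nat.centralBinom (N-i-j) := by
        intro i hi
        rw [Finset.mem_range] at hi
        rw [Finset.sum_Ico_eq_sum_range]
        have hlen : N + 1 - i = N - i + 1 := by omega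
        rw [hlen, Finset.mul_sum]
        refine Finset.sum_congr rfl fun j _ => ?_
        have e1 : i + j - i = j := by omega
        have e2 : N - (i + j) = N - i - j := by omega
        rw [e1, e2, mul_assoc]
      have step5 : ∑ i ∈ range (N+1), (catalan i *
              ∑ j ∈ range (N-i+1), catalan j * Nat.centralBinom (N-i-j)) + catalan (N+1)
          = 2 * ∑ i ∈ range (N+1), catalan i * Nat.centralBinom (N-i) := by
        rw [catalan_succ N, Fin.sum_univ_eq_sum_range (fun i => catalan i * catalan (N - i)) (N+1),
          ← Finset.sum_add_distrib, Finset.mul_sum]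
        refine Finset.sum_congr rfl fun i hi => ?_
        rw [Finset.mem_range] at hi
        have := ih (N - i) (by omega)
        calc catalan i * (∑ j ∈ range (N-i+1), catalan j * Nat.centralBinom (N-i-j))
              + catalan i * catalan (N-i)
            = catalan i * ((∑ j ∈ range (N-i+1), catalan j * Nat.centralBinom (N-i-j))
              + catalan (N-i)) := by ring
          _ = catalan i * (2 * Nat.centralBinom (N-i)) := by rw [this]
          _ = 2 * (catalan i * Nat.centralBinom (N-i)) := by ring
      have ihN := ih N (by omega)
      have hB := lemB N
      have main : ∑ m ∈ range (N+2), catalan m * Nat.centralBinom (N+1-m) + catalan (N+1)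
          = Nat.centralBinom (N+1) + 2 * ∑ i ∈ range (N+1), catalan i * Nat.centralBinom (N-i) := by
        rw [step1, step2, step3, Finset.sum_congr rfl step4, add_assoc, step5]
      rw [main]
      omega

lemma lemStar (N : ℕ) : aa (N+1)
    = aa N + ∑ m ∈ range N, (aa m * catalan (N-m) + catalan m * aa (N-m)) := by
  set C1 := ∑ m ∈ range (N+1), catalan m * aa (N-m) with hC1
  have e1 : (∑ m ∈ range N, catalan m * aa (N-m)) + catalan N = C1 := by
    rw [hC1, Finset.sum_range_succ]
    simp [aa]
  have e2 : (∑ m ∈ range N, aa m * catalan (N-m)) + aa N = C1 := by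
    rw [hC1, ← Finset.sum_range_reflect (fun m => catalan m * aa (N - m)) (N+1)]
    have : ∀ m ∈ range (N+1), catalan (N+1-1-m) * aa (N-(N+1-1-m)) = aa m * catalan (N-m) := by
      intro m hm
      rw [Finset.mem_range] at hm
      have h1 : N+1-1-m = N - m := by omega
      have h2 : N - (N - m) = m := by omega
      rw [h1, h2, mul_comm]
    rw [Finset.sum_congr rfl this, Finset.sum_range_succ]
    simp
  have e3 : 2 * C1 = 2 * Nat.centralBinom N := by
    rw [← lemIV N, hC1, Finset.mul_sum]
    rw [Finset.sum_range_succ, Finset.sum_range_succ]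
    have : ∀ m ∈ range N, 2 * (catalan m * aa (N-m)) = catalan m * Nat.centralBinom (N-m) := by
      intro m hm
      rw [Finset.mem_range] at hm
      obtain ⟨k, hk⟩ : ∃ k, N - m = k + 1 := ⟨N - m - 1, by omega⟩
      rw [hk, lemA k]; ring
    rw [Finset.sum_congr rfl this]
    simp [aa, Nat.centralBinom]
    ring
  have e4 : 2 * aa (N+1) = Nat.centralBinom (N+1) := (lemA N).symm
  have e5 := lemB N
  have goal2 : 2 * (aa N + ∑ m ∈ range N, (aa m * catalan (N-m) + catalan m * aa (N-m)))
      = 2 * aa (N+1) := by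
    rw [Finset.sum_add_distrib, e4]
    omega
  omega



/-- The set of Catalan words of length `n`: words `w` over ℕ with `w 1 = 0` and
`w (i+1) ≤ w i + 1` for all `i`. -/
def CatalanWord (n : ℕ) : Set (List ℕ) :=
  {w | w.length = n ∧ w.getD 0 0 = 0 ∧
    ∀ i, i + 1 < n → w.getD (i + 1) 0 ≤ w.getD i 0 + 1}

/-- Number of runs of ascents of `w`: `1 + #{i : w i ≥ w (i+1)}`. -/
def ascRuns (w : List ℕ) : ℕ :=
  1 + ((Finset.range (w.length - 1)).filter
    (fun i => w.getD (i + 1) 0 ≤ w.getD i 0)).card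


def nonAsc : List ℕ → ℕ
  | a :: b :: t => (if b ≤ a then 1 else 0) + nonAsc (b :: t)
  | _ => 0

@[simp] lemma nonAsc_nil : nonAsc [] = 0 := rfl
@[simp] lemma nonAsc_single (a : ℕ) : nonAsc [a] = 0 := rfl
lemma nonAsc_cons_cons (a b : ℕ) (t : List ℕ) :
    nonAsc (a :: b :: t) = (if b ≤ a then 1 else 0) + nonAsc (b :: t) := rfl

lemma ascRuns_eq (w : List ℕ) : ascRuns w = 1 + nonAsc w := by
  unfold ascRuns
  congr 1
  induction w with
  | nil => simp
  | cons a t ih =>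
    cases t with
    | nil => simp
    | cons b t' =>
      rw [Finset.card_filter] at ih ⊢
      simp only [List.length_cons]
      simp only [Nat.add_sub_cancel]
      rw [Finset.sum_range_succ'
        (fun i => if (a :: b :: t').getD (i+1) 0 ≤ (a :: b :: t').getD i 0 then 1 else 0) t'.length]
      have h1 : ∀ i, ((a :: b :: t').getD (i+2) 0) = (b :: t').getD (i+1) 0 := fun i => rfl
      have h2 : ∀ i, ((a :: b :: t').getD (i+1) 0) = (b :: t').getD i 0 := fun i => rfl
      simp only [List.length_cons, Nat.add_sub_cancel] at ih
      rw [nonAsc_cons_cons, ← ih]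
      simp only [List.getD_cons_succ, List.getD_cons_zero]
      ring

lemma nonAsc_map (u : List ℕ) : nonAsc (u.map (· + 1)) = nonAsc u := by
  induction u with
  | nil => simp
  | cons a t ih =>
    cases t with
    | nil => simp
    | cons b t' =>
      simp only [List.map_cons] at ih ⊢
      rw [nonAsc_cons_cons, nonAsc_cons_cons, ih]
      congr 1
      simp

lemma nonAsc_zero_cons_map (u : List ℕ) : nonAsc (0 :: u.map (· + 1)) = nonAsc u := by
  cases u with
  | nil => simp
  | cons a t =>
    simp only [List.map_cons]
    rw [nonAsc_cons_cons]
    have : ¬ (a + 1 ≤ 0) := by omega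
    rw [if_neg this, zero_add]
    exact nonAsc_map (a :: t)

lemma nonAsc_append_zero_cons (xs : List ℕ) (hxs : xs ≠ []) (ys : List ℕ) :
    nonAsc (xs ++ 0 :: ys) = nonAsc xs + 1 + nonAsc (0 :: ys) := by
  induction xs with
  | nil => exact absurd rfl hxs
  | cons a t ih =>
    cases t with
    | nil =>
      simp only [List.cons_append, List.nil_append]
      rw [nonAsc_cons_cons, if_pos (Nat.zero_le a)]
      simp [add_comm]
    | cons b t' =>
      simp only [List.cons_append] at ih ⊢
      rw [nonAsc_cons_cons, ih (by simp), nonAsc_cons_cons]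
      ring

lemma ascRuns_decomp_nil (u : List ℕ) :
    ascRuns (0 :: (u.map (· + 1) ++ [])) = ascRuns u := by
  rw [List.append_nil, ascRuns_eq, ascRuns_eq, nonAsc_zero_cons_map]

lemma ascRuns_decomp (u z' : List ℕ) :
    ascRuns (0 :: (u.map (· + 1) ++ 0 :: z')) = ascRuns u + ascRuns (0 :: z') := by
  rw [ascRuns_eq, ascRuns_eq, ascRuns_eq]
  have : (0 :: (u.map (· + 1) ++ 0 :: z')) = (0 :: u.map (· + 1)) ++ 0 :: z' := by simp
  rw [this, nonAsc_append_zero_cons _ (by simp) _, nonAsc_zero_cons_map]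
  ring

def FC : ℕ → Finset (List ℕ)
  | 0 => {[]}
  | (n+1) => (Finset.range (n+1)).attach.biUnion (fun m =>
      ((FC m.1) ×ˢ (FC (n - m.1))).image (fun p => 0 :: (p.1.map (· + 1) ++ p.2)))
decreasing_by
  · exact Nat.lt_succ_of_le (Nat.le_of_lt_succ (Finset.mem_range.mp m.2))
  · exact Nat.lt_succ_of_le (Nat.sub_le n m.1)

lemma chain'_iff_getD (w : List ℕ) :
    List.Chain' (fun a b => b ≤ a + 1) w ↔
      ∀ i, i + 1 < w.length → w.getD (i + 1) 0 ≤ w.getD i 0 + 1 := by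
  simp only [List.Chain']
  rw [List.isChain_iff_getElem]
  constructor
  · intro h i hi
    have h1 : i < w.length - 1 := by omega
    have := h i (by omega)
    rw [List.getD_eq_getElem _ _ (by omega : i < w.length),
      List.getD_eq_getElem _ _ (by omega : i + 1 < w.length)]
    simpa [List.get_eq_getElem] using this
  · intro h i hi
    have := h i (by omega)
    rw [List.getD_eq_getElem _ _ (by omega : i < w.length),
      List.getD_eq_getElem _ _ (by omega : i + 1 < w.length)] at this
    simpa [List.get_eq_getElem] using this

lemma mem_CW_iff (n : ℕ) (w : List ℕ) :
    w ∈ CatalanWord n ↔ w.length = n ∧ w.getD 0 0 = 0 ∧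
      List.Chain' (fun a b => b ≤ a + 1) w := by
  constructor
  · rintro ⟨h1, h2, h3⟩
    exact ⟨h1, h2, (chain'_iff_getD w).2 (by rw [h1]; exact h3)⟩
  · rintro ⟨h1, h2, h3⟩
    exact ⟨h1, h2, by rw [← h1]; exact (chain'_iff_getD w).1 h3⟩

lemma FC_spec : ∀ n : ℕ, ∀ w : List ℕ, w ∈ FC n ↔ w ∈ CatalanWord n := by
  intro n
  induction n using Nat.strong_induction_on with
  | _ n ih =>
    match n with
    | 0 =>
      intro w
      rw [FC]
      simp only [Finset.mem_singleton, mem_CW_iff]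
      constructor
      · rintro rfl; exact ⟨rfl, rfl, List.isChain_nil⟩
      · rintro ⟨h1, -, -⟩; exact List.length_eq_zero_iff.mp h1
    | (n+1) =>
      intro w
      rw [FC]
      simp only [Finset.mem_biUnion, Finset.mem_attach, Finset.mem_image, Finset.mem_product,
        true_and, Subtype.exists, Finset.mem_range]
      constructor
      · rintro ⟨m, hm, ⟨u, z⟩, ⟨hu, hz⟩, rfl⟩
        have hm' : m ≤ n := Nat.lt_succ_iff.mp hm
        rw [ih m (by omega) u, mem_CW_iff] at hu
        rw [ih (n - m) (by omega) z, mem_CW_iff] at hz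
        obtain ⟨hul, hu0, huc⟩ := hu
        obtain ⟨hzl, hz0, hzc⟩ := hz
        rw [mem_CW_iff]
        refine ⟨by simp [hul, hzl]; omega, by simp, ?_⟩
        simp only [List.Chain']
        rw [List.isChain_cons]
        constructor
        · intro y hy
          cases u with
          | nil =>
            simp only [List.map_nil, List.nil_append] at hy
            cases z with
            | nil => simp at hy
            | cons c zt =>
              simp only [List.head?_cons, Option.mem_def, Option.some.injEq] at hy
              simp only [List.getD_cons_zero] at hz0
              omega
          | cons c ut =>
            simp only [List.map_cons, List.cons_append, List.head?_cons, Option.mem_def,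
              Option.some.injEq] at hy
            simp only [List.getD_cons_zero] at hu0
            omega
        · rw [List.isChain_append]
          refine ⟨?_, hzc, ?_⟩
          · rw [List.isChain_map]
            exact huc.imp (fun a b h => by simpa using h)
          · intro x hx y hy
            have : y = 0 := by
              cases z with
              | nil => simp at hy
              | cons c t => simp at hy; simp at hz0; omega
            omega
      · rintro hw
        rw [mem_CW_iff] at hw
        obtain ⟨hl, h0, hc⟩ := hw
        obtain ⟨t, rfl⟩ : ∃ t, w = 0 :: t := by
          cases w with
          | nil => simp at hl
          | cons a t => simp at h0; exact ⟨t, by simp [h0]⟩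
        set P := t.takeWhile (fun x => x ≠ 0) with hP
        set z := t.dropWhile (fun x => x ≠ 0) with hz
        have htPz : P ++ z = t := List.takeWhile_append_dropWhile
        have hPpos : ∀ x ∈ P, x ≠ 0 := by
          intro x hx
          have := List.mem_takeWhile_imp hx
          simpa using this
        set u := P.map (fun x => x - 1) with hu
        have hPu : P = u.map (· + 1) := by
          rw [hu, List.map_map]
          have hcong : ∀ x ∈ P, ((fun x => x + 1) ∘ fun x => x - 1) x = id x := by
            intro x hx
            have := hPpos x hx
            simp; omega
          rw [List.map_congr_left hcong, List.map_id]
        have hlen : P.length + z.length = n := by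
          have := congrArg List.length htPz
          simp at this; simp at hl; omega
        refine ⟨P.length, by omega, ⟨u, z⟩, ⟨?_, ?_⟩, ?_⟩
        · -- u ∈ FC P.length
          rw [ih P.length (by omega) u, mem_CW_iff]
          refine ⟨by simp [hu], ?_, ?_⟩
          · -- head of u is 0 (or u empty)
            cases hPe : P with
            | nil => simp [hu, hPe]
            | cons p ps =>
              have hp1 : p ≤ 1 := by
                have : t = p :: (ps ++ z) := by rw [← htPz, hPe]; simp
                rw [this] at hc
                have := (List.isChain_cons_cons.mp hc).1
                omega
              have hpne : p ≠ 0 := hPpos p (by rw [hPe]; simp)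
              simp [hu, hPe]; omega
          · -- chain' for u
            have hcP : List.Chain' (fun a b => b ≤ a + 1) P := by
              refine (List.isChain_cons.mp hc).2.prefix ?_
              rw [← htPz]; exact List.prefix_append P z
            rw [hPu] at hcP
            simp only [List.Chain'] at hcP ⊢
            rw [List.isChain_map] at hcP
            exact hcP.imp (fun a b h => by simpa using h)
        · -- z ∈ FC (n - P.length)
          rw [ih (n - P.length) (by omega) z, mem_CW_iff]
          refine ⟨by omega, ?_, ?_⟩
          · cases hze : z with
            | nil => simp
            | cons c zt =>
              have hne : List.dropWhile (fun x : ℕ => decide (x ≠ 0)) t ≠ [] := by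
                rw [← hz, hze]; simp
              have hh := List.head_dropWhile_not (fun x : ℕ => decide (x ≠ 0)) hne
              have hhead : (List.dropWhile (fun x : ℕ => decide (x ≠ 0)) t).head hne = c := by
                have : z.head (by rw [hze]; simp) = c := by
                  simp only [hze, List.head_cons]
                simpa [hz] using this
              rw [hhead] at hh
              simp only [decide_eq_false_iff_not, ne_eq, not_not] at hh
              simp [hh]
          · refine (List.isChain_cons.mp hc).2.suffix ?_
            rw [← htPz]; exact List.suffix_append P z
        · rw [← hPu, htPz]

lemma FC_length {k : ℕ} {w : List ℕ} (h : w ∈ FC k) : w.length = k :=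
  ((FC_spec k w).1 h).1

lemma FC_getD0 {k : ℕ} {w : List ℕ} (h : w ∈ FC k) : w.getD 0 0 = 0 :=
  ((FC_spec k w).1 h).2.1

lemma FC_head {k : ℕ} {w : List ℕ} (h : w ∈ FC k) (hk : 1 ≤ k) : ∃ t, w = 0 :: t := by
  have h1 := FC_length h
  have h2 := FC_getD0 h
  cases w with
  | nil => simp at h1; omega
  | cons a t => simp at h2; exact ⟨t, by rw [h2]⟩

lemma aux_ne {u z u' z' : List ℕ} (hlt : u.length < u'.length) (hz0 : z.getD 0 0 = 0) :
    u.map (· + 1) ++ z ≠ u'.map (· + 1) ++ z' := by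
  intro h
  have h1 : (u.map (· + 1) ++ z).getD u.length 0 = z.getD 0 0 := by
    rw [List.getD_append_right _ _ _ _ (by simp)]
    simp
  have h2 : (u'.map (· + 1) ++ z').getD u.length 0 = u'.getD u.length 0 + 1 := by
    rw [List.getD_append _ _ _ _ (by simpa using hlt)]
    rw [List.getD_eq_getElem _ _ (by simpa using hlt), List.getElem_map,
      List.getD_eq_getElem _ _ hlt]
  rw [h] at h1
  omega

lemma FC_sum (n : ℕ) (g : List ℕ → ℕ) :
    ∑ w ∈ FC (n+1), g w
      = ∑ m ∈ Finset.range (n+1), ∑ p ∈ FC m ×ˢ FC (n - m),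
          g (0 :: (p.1.map (· + 1) ++ p.2)) := by
  have hdisj : (↑((Finset.range (n+1)).attach) : Set {x // x ∈ Finset.range (n+1)}).PairwiseDisjoint
      (fun m : {x // x ∈ Finset.range (n+1)} =>
        ((FC m.1) ×ˢ (FC (n - m.1))).image (fun p => 0 :: (p.1.map (· + 1) ++ p.2))) := by
    intro m₁ _ m₂ _ hne
    simp only [Function.onFun]
    rw [Finset.disjoint_left]
    rintro w hw1 hw2
    simp only [Finset.mem_image, Finset.mem_product] at hw1 hw2
    obtain ⟨⟨u, z⟩, ⟨hu, hz⟩, h1⟩ := hw1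
    obtain ⟨⟨u', z'⟩, ⟨hu', hz'⟩, h2⟩ := hw2
    have hlu : u.length = m₁.1 := FC_length hu
    have hlu' : u'.length = m₂.1 := FC_length hu'
    have hmm : m₁.1 ≠ m₂.1 := fun h => hne (Subtype.ext h)
    have heq : u.map (· + 1) ++ z = u'.map (· + 1) ++ z' := by
      rw [← h2] at h1
      exact (List.cons.injEq _ _ _ _).mp h1 |>.2
    rcases Nat.lt_or_ge u.length u'.length with hlt | hge
    · exact aux_ne hlt (FC_getD0 hz) heq
    · have hlt : u'.length < u.length := by omega
      exact aux_ne hlt (FC_getD0 hz') heq.symm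
  rw [FC, Finset.sum_biUnion hdisj]
  rw [← Finset.sum_attach (Finset.range (n+1))
    (fun m => ∑ p ∈ FC m ×ˢ FC (n - m), g (0 :: (p.1.map (· + 1) ++ p.2)))]
  refine Finset.sum_congr rfl fun m _ => ?_
  refine Finset.sum_image ?_
  intro p hp q hq hpq
  simp only [List.cons.injEq, true_and] at hpq
  rw [Finset.mem_coe, Finset.mem_product] at hp hq
  have hl : (p.1.map (· + 1)).length = (q.1.map (· + 1)).length := by
    simp [FC_length hp.1, FC_length hq.1]
  obtain ⟨e1, e2⟩ := List.append_inj hpq hl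
  have hinj : Function.Injective (fun x : ℕ => x + 1) := fun a b h => by simpa using h
  have e1' : p.1 = q.1 := List.map_injective_iff.mpr hinj e1
  exact Prod.ext e1' e2

lemma FC_card : ∀ n : ℕ, (FC n).card = catalan n := by
  intro n
  induction n using Nat.strong_induction_on with
  | _ n ih =>
    match n with
    | 0 => rw [FC]; simp
    | (n+1) =>
      rw [Finset.card_eq_sum_ones, FC_sum n (fun _ => 1)]
      have : ∀ m ∈ Finset.range (n+1),
          (∑ _p ∈ FC m ×ˢ FC (n - m), 1) = catalan m * catalan (n - m) := by
        intro m hm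
        rw [Finset.mem_range] at hm
        rw [← Finset.card_eq_sum_ones, Finset.card_product,
          ih m (by omega), ih (n - m) (by omega)]
      rw [Finset.sum_congr rfl this, catalan_succ n,
        Fin.sum_univ_eq_sum_range (fun i => catalan i * catalan (n - i)) (n+1)]

lemma FC_sumAsc : ∀ n : ℕ, (∑ w ∈ FC n, ascRuns w) = aa n := by
  intro n
  induction n using Nat.strong_induction_on with
  | _ n ih =>
    match n with
    | 0 =>
      rw [FC]
      simp [ascRuns, aa]
    | (n+1) =>
      rw [FC_sum n ascRuns, Finset.sum_range_succ]
      have htop : (∑ p ∈ FC n ×ˢ FC (n - n), ascRuns (0 :: (p.1.map (· + 1) ++ p.2)))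
          = aa n := by
        rw [Nat.sub_self, show FC 0 = {[]} from by rw [FC]]
        rw [Finset.sum_product]
        simp only [Finset.sum_singleton]
        rw [← ih n (by omega)]
        exact Finset.sum_congr rfl fun u _ => ascRuns_decomp_nil u
      have hrest : ∀ m ∈ Finset.range n,
          (∑ p ∈ FC m ×ˢ FC (n - m), ascRuns (0 :: (p.1.map (· + 1) ++ p.2)))
            = aa m * catalan (n - m) + catalan m * aa (n - m) := by
        intro m hm
        rw [Finset.mem_range] at hm
        rw [Finset.sum_product]
        have hinner : ∀ u ∈ FC m, (∑ z ∈ FC (n - m), ascRuns (0 :: (u.map (· + 1) ++ z)))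
            = (FC (n - m)).card * ascRuns u + ∑ z ∈ FC (n - m), ascRuns z := by
          intro u _
          have : ∀ z ∈ FC (n - m), ascRuns (0 :: (u.map (· + 1) ++ z))
              = ascRuns u + ascRuns z := by
            intro z hz
            obtain ⟨z', rfl⟩ := FC_head hz (by omega)
            exact ascRuns_decomp u z'
          rw [Finset.sum_congr rfl this, Finset.sum_add_distrib, Finset.sum_const, smul_eq_mul]
        rw [Finset.sum_congr rfl hinner, Finset.sum_add_distrib, ← Finset.mul_sum,
          Finset.sum_const, smul_eq_mul]
        rw [ih m (by omega), ih (n - m) (by omega), FC_card m, FC_card (n - m)]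
        ring
      rw [Finset.sum_congr rfl hrest, htop, lemStar n]
      ring

/-- The total number of runs of ascents over all Catalan words of length `n` is
`C(2n-1, n)`. -/
theorem total_ascRuns (n : ℕ) (hn : 1 ≤ n) :
    ∑ᶠ w ∈ CatalanWord n, ascRuns w = Nat.choose (2 * n - 1) n := by
  have hset : CatalanWord n = (↑(FC n) : Set (List ℕ)) := by
    ext w
    rw [Finset.mem_coe, FC_spec n w]
  rw [hset, finsum_mem_coe_finset, FC_sumAsc n]
  rfl
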